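/- Molecular theorem: Let 0 < s < ∞, 0 < p < ∞, α ∈ ℝ, A₀, B₀ ∈ ℝ with A₀ - B₀ = 1/s - 1/p - α/(np), and 0 < ε < A₀; set a = A₀ - ε, b = B₀ - ε, and assume a > 0. If M ∈ L^s(ℝⁿ) satisfies M(x)|x-x₀|^{nb} ∈ L^s and ℜ(M) := ‖M‖_{L^s}^{a/b} · ‖M(·)|·-x₀|^{nb}‖_{L^s}^{1-a/b} < ∞, then M ∈ BL^{p,s}_{|x|^α}(ℝⁿ) and ‖M‖_{BL^{p,s}_{|x|^α}} ≤ C ℜ(M) with C independent of M. -/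

import Mathlib

open MeasureTheory Metric ENNReal Filter
open scoped ENNReal NNReal

noncomputable section

abbrev Rn (n : ℕ) := EuclideanSpace ℝ (Fin n)

/-- A `(p,s,α)`-block: supported in a closed ball `B(x₀,r)` with
`‖a‖_{L^s} ≤ |B|^{-α/(pn)-1/p+1/s}` (with `1/s = 0` when `s = ∞`). -/
def IsBlock (n : ℕ) (p : ℝ) (s : ℝ≥0∞) (α : ℝ) (a : Rn n → ℝ) : Prop :=
  Measurable a ∧
  ∃ x₀ : Rn n, ∃ r : ℝ, 0 < r ∧ (∀ x, x ∉ closedBall x₀ r → a x = 0) ∧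
    eLpNorm a s volume ≤
      ENNReal.ofReal ((volume (closedBall x₀ r)).toReal ^ (-α / (p * n) - 1 / p + s.toReal⁻¹))

/-- A decomposition `f = Σ l k • a k` (a.e. convergence) into `(p,s,α)`-blocks with
`Σ |l k| ^ min p 1 < ∞`. -/
def IsBLDecomp (n : ℕ) (p : ℝ) (s : ℝ≥0∞) (α : ℝ)
    (f : Rn n → ℝ) (l : ℕ → ℝ) (a : ℕ → Rn n → ℝ) : Prop :=
  (∀ k, IsBlock n p s α (a k)) ∧ Summable (fun k => |l k| ^ min p 1) ∧
  (∀ᵐ x : Rn n ∂volume, HasSum (fun k => l k * a k x) (f x))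

/-- Membership in the block space `BL^{p,s}_{|x|^α}`. -/
def MemBL (n : ℕ) (p : ℝ) (s : ℝ≥0∞) (α : ℝ) (f : Rn n → ℝ) : Prop :=
  ∃ l a, IsBLDecomp n p s α f l a

/-- The quasinorm of `BL^{p,s}_{|x|^α}`:
`inf (Σ |l k| ^ min p 1)^(1/min p 1)` over all block decompositions. -/
def BLnorm (n : ℕ) (p : ℝ) (s : ℝ≥0∞) (α : ℝ) (f : Rn n → ℝ) : ℝ :=
  sInf { c | ∃ l a, IsBLDecomp n p s α f l a ∧
    c = (∑' k, |l k| ^ min p 1) ^ (min p 1)⁻¹ }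

set_option maxHeartbeats 1000000

lemma BL_bddBelow (n : ℕ) (p : ℝ) (s : ℝ≥0∞) (α : ℝ) (f : Rn n → ℝ) :
    BddBelow { c | ∃ l a, IsBLDecomp n p s α f l a ∧
      c = (∑' k, |l k| ^ min p 1) ^ (min p 1)⁻¹ } := by
  refine ⟨0, ?_⟩
  rintro y ⟨l, a, -, rfl⟩
  exact Real.rpow_nonneg (tsum_nonneg fun k => Real.rpow_nonneg (abs_nonneg _) _) _

lemma zero_isBlock (n : ℕ) (p : ℝ) (s : ℝ≥0∞) (α : ℝ) :
    IsBlock n p s α (fun _ => (0:ℝ)) :=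
  ⟨measurable_const, 0, 1, one_pos, fun _ _ => rfl, by simp [eLpNorm_zero']⟩

lemma memBL_of_ae_zero (n : ℕ) (p : ℝ) (s : ℝ≥0∞) (α : ℝ) (hp : 0 < p)
    {f : Rn n → ℝ} (hf : f =ᵐ[volume] 0) :
    MemBL n p s α f ∧ BLnorm n p s α f ≤ 0 := by
  have hmp : 0 < min p 1 := lt_min hp one_pos
  have hdec : IsBLDecomp n p s α f (fun _ => 0) (fun _ => fun _ => 0) := by
    refine ⟨fun _ => zero_isBlock n p s α, ?_, ?_⟩
    · simpa [Real.zero_rpow hmp.ne'] using summable_zero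
    · filter_upwards [hf] with x hx
      simpa [hx] using hasSum_zero
  refine ⟨⟨_, _, hdec⟩, ?_⟩
  apply csInf_le (BL_bddBelow n p s α f)
  refine ⟨_, _, hdec, ?_⟩
  simp [Real.zero_rpow hmp.ne', Real.zero_rpow (inv_ne_zero hmp.ne')]

/-- molecular theorem: with `A₀ - B₀ = 1/s - 1/p - α/(np)`,
`0 < ε < A₀`, `a = A₀ - ε > 0`, `b = B₀ - ε ≠ 0`, every `(p,s,α,ε)`-molecule `M`
belongs to `BL^{p,s}_{|x|^α}` with `‖M‖_{BL} ≤ C ℜ(M)`, `C` independent of `M`. -/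
theorem molecular_theorem (n : ℕ) (hn : 0 < n) (p : ℝ) (s : ℝ≥0∞) (α A₀ B₀ ε : ℝ)
    (hp : 0 < p) (hs : 0 < s) (hs' : s ≠ ∞)
    (hAB : A₀ - B₀ = s.toReal⁻¹ - 1 / p - α / (n * p))
    (hε : 0 < ε) (hεA : ε < A₀) (hb : B₀ - ε ≠ 0) :
    ∃ C > (0 : ℝ), ∀ (M : Rn n → ℝ) (x₀ : Rn n), Measurable M →
      eLpNorm M s volume < ∞ →
      eLpNorm (fun x => M x * ‖x - x₀‖ ^ ((n : ℝ) * (B₀ - ε))) s volume < ∞ →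
      MemBL n p s α M ∧
      BLnorm n p s α M ≤
        C * ((eLpNorm M s volume).toReal ^ ((A₀ - ε) / (B₀ - ε)) *
          (eLpNorm (fun x => M x * ‖x - x₀‖ ^ ((n : ℝ) * (B₀ - ε))) s volume).toReal
            ^ (1 - (A₀ - ε) / (B₀ - ε))) := by
  have hn' : (0:ℝ) < n := Nat.cast_pos.mpr hn
  set mp := min p 1 with hmp_def
  have hmp : 0 < mp := lt_min hp one_pos
  set A := A₀ - ε with hA_def
  set B := B₀ - ε with hB_def
  have ha : 0 < A := sub_pos.mpr hεA
  set γ := -α / (p * n) - 1 / p + s.toReal⁻¹ with hγ_def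
  have hγ : γ = A - B := by
    have h1 : A - B = A₀ - B₀ := by rw [hA_def, hB_def]; ring
    rw [h1, hAB, hγ_def]; ring
  set c := (volume (closedBall (0:Rn n) 1)).toReal with hc_def
  have hc : 0 < c := ENNReal.toReal_pos
    (measure_closedBall_pos _ _ one_pos).ne' measure_closedBall_lt_top.ne
  set K : ℝ := max 1 ((2:ℝ) ^ (-((n:ℝ)*B))) with hK_def
  set K' : ℝ := max ((2:ℝ) ^ ((n:ℝ)*B)) 1 with hK'_def
  have hK1 : 1 ≤ K := le_max_left _ _
  have hK'1 : 1 ≤ K' := le_max_right _ _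
  have hKpos : 0 < K := lt_of_lt_of_le one_pos hK1
  have hK'pos : 0 < K' := lt_of_lt_of_le one_pos hK'1
  have hKK' : K' * (2:ℝ) ^ (-((n:ℝ)*B)) = K := by
    rw [hK'_def, hK_def, max_mul_of_nonneg _ _ (Real.rpow_nonneg (by norm_num) _),
      ← Real.rpow_add two_pos, one_mul]
    norm_num
  set q : ℝ := (2:ℝ) ^ (-((n:ℝ)*A)) with hq_def
  have hq0 : 0 < q := Real.rpow_pos_of_pos two_pos _
  have hq1 : q < 1 := Real.rpow_lt_one_of_one_lt_of_neg one_lt_two (neg_lt_zero.mpr (mul_pos hn' ha))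
  have hqmp0 : 0 ≤ q ^ mp := Real.rpow_nonneg hq0.le _
  have hqmp1 : q ^ mp < 1 := Real.rpow_lt_one hq0.le hq1 hmp
  have hqinv : 0 < ((1 - q ^ mp)⁻¹) ^ mp⁻¹ :=
    Real.rpow_pos_of_pos (inv_pos.mpr (by linarith)) _
  set C := K' * c ^ (-γ) * ((1 - q ^ mp)⁻¹) ^ mp⁻¹ with hC_def
  have hcγ : 0 < c ^ (-γ) := Real.rpow_pos_of_pos hc _
  have hC : 0 < C := by positivity
  refine ⟨C, hC, ?_⟩
  intro M x₀ hMmeas hMfin hNfin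
  set N := fun x => M x * ‖x - x₀‖ ^ ((n:ℝ)*B) with hN_def
  have hNmeas : Measurable N := by
    have h1 : Measurable fun t : ℝ => t ^ ((n:ℝ)*B) := by measurability
    exact hMmeas.mul (h1.comp ((measurable_id.sub measurable_const).norm))
  have hRHS0 : (0:ℝ) ≤ C * ((eLpNorm M s volume).toReal ^ (A / B) *
      (eLpNorm N s volume).toReal ^ (1 - A / B)) := by
    have := (eLpNorm M s volume).toReal_nonneg
    have := (eLpNorm N s volume).toReal_nonneg
    positivity
  by_cases hN0 : eLpNorm N s volume = 0
  · -- degenerate case : M = 0 a.e.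
    haveI : Nontrivial (Rn n) := ⟨0, EuclideanSpace.single ⟨0, hn⟩ 1, by
      intro h; have := congrArg (fun v : Rn n => v ⟨0, hn⟩) h; simp at this⟩
    have hsing : volume ({x₀} : Set (Rn n)) = 0 := measure_singleton x₀
    have hM0 : M =ᵐ[volume] 0 := by
      have h1 : N =ᵐ[volume] 0 :=
        (eLpNorm_eq_zero_iff hNmeas.aestronglyMeasurable hs.ne').mp hN0
      have h2 : ∀ᵐ x ∂(volume : Measure (Rn n)), x ≠ x₀ := by
        rw [ae_iff]; simpa using hsing
      filter_upwards [h1, h2] with x hx hxx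
      have hne : ‖x - x₀‖ ^ ((n:ℝ)*B) ≠ 0 :=
        (Real.rpow_pos_of_pos (by simpa [sub_ne_zero] using hxx : (0:ℝ) < ‖x - x₀‖) _).ne'
      have hx' : M x * ‖x - x₀‖ ^ ((n:ℝ)*B) = 0 := hx
      simpa using (mul_eq_zero.mp hx').resolve_right hne
    obtain ⟨hmem, hle⟩ := memBL_of_ae_zero n p s α hp hM0
    exact ⟨hmem, le_trans hle hRHS0⟩
  · -- main case
    have hM0 : eLpNorm M s volume ≠ 0 := by
      intro h
      apply hN0
      have hM' : M =ᵐ[volume] 0 :=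
        (eLpNorm_eq_zero_iff hMmeas.aestronglyMeasurable hs.ne').mp h
      refine (eLpNorm_eq_zero_iff hNmeas.aestronglyMeasurable hs.ne').mpr ?_
      filter_upwards [hM'] with x hx
      simp [hN_def, hx]
    set m := (eLpNorm M s volume).toReal with hm_def
    set nn := (eLpNorm N s volume).toReal with hnn_def
    have hm : 0 < m := ENNReal.toReal_pos hM0 hMfin.ne
    have hnn : 0 < nn := ENNReal.toReal_pos hN0 hNfin.ne
    have hMeq : eLpNorm M s volume = ENNReal.ofReal m := (ENNReal.ofReal_toReal hMfin.ne).symm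
    have hNeq : eLpNorm N s volume = ENNReal.ofReal nn := (ENNReal.ofReal_toReal hNfin.ne).symm
    have hnB : (n:ℝ) * B ≠ 0 := mul_ne_zero hn'.ne' hb
    have hT : 0 < nn / m := div_pos hnn hm
    set R := (nn / m) ^ ((n:ℝ)*B)⁻¹ with hR_def
    have hR : 0 < R := Real.rpow_pos_of_pos hT _
    have hRnb : R ^ ((n:ℝ)*B) = nn / m := by
      rw [hR_def, ← Real.rpow_mul hT.le, inv_mul_cancel₀ hnB, Real.rpow_one]
    have hnnR : nn = m * R ^ ((n:ℝ)*B) := by rw [hRnb]; field_simp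
    set ℜ := m ^ (A/B) * nn ^ (1 - A/B) with hℜ_def
    have hℜpos : 0 < ℜ :=
      mul_pos (Real.rpow_pos_of_pos hm _) (Real.rpow_pos_of_pos hnn _)
    have he : ((n:ℝ)*B)⁻¹ * (-((n:ℝ)*γ)) = 1 - A/B := by
      rw [hγ]; field_simp; ring
    have hmR : m * R ^ (-((n:ℝ)*γ)) = ℜ := by
      rw [hR_def, ← Real.rpow_mul hT.le, he, Real.div_rpow hnn.le hm.le, hℜ_def]
      have hu : m / m ^ (1 - A/B) = m ^ (A/B) := by
        nth_rewrite 1 [← Real.rpow_one m]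
        rw [← Real.rpow_sub hm]
        congr 1; ring
      calc m * (nn ^ (1 - A/B) / m ^ (1 - A/B))
          = (m / m ^ (1 - A/B)) * nn ^ (1 - A/B) := by ring
        _ = m ^ (A/B) * nn ^ (1 - A/B) := by rw [hu]
    -- annuli
    set ρ : ℕ → ℝ := fun k => match k with | 0 => -1 | (j+1) => R * 2 ^ j with hρ_def
    have hρ0 : ρ 0 = -1 := rfl
    have hρs : ∀ j : ℕ, ρ (j+1) = R * 2 ^ j := fun j => rfl
    set Ab : ℕ → Set (Rn n) := fun k => closedBall x₀ (R * 2 ^ k) \ closedBall x₀ (ρ k)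
      with hAb_def
    have hAbm : ∀ k, MeasurableSet (Ab k) := fun k =>
      measurableSet_closedBall.diff measurableSet_closedBall
    set Mk : ℕ → Rn n → ℝ := fun k => (Ab k).indicator M with hMk_def
    have hMkmeas : ∀ k, Measurable (Mk k) := fun k => hMmeas.indicator (hAbm k)
    set c0 := K' * c ^ (-γ) * ℜ with hc0_def
    have hc0 : 0 < c0 := by positivity
    set l : ℕ → ℝ := fun k => c0 * q ^ k with hl_def
    have hl : ∀ k, 0 < l k := fun k => mul_pos hc0 (pow_pos hq0 k)
    set ak : ℕ → Rn n → ℝ := fun k => fun x => (l k)⁻¹ * Mk k x with hak_def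
    have hVol : ∀ k : ℕ, (volume (closedBall x₀ (R * 2 ^ k))).toReal = (R * 2 ^ k) ^ n * c := by
      intro k
      rw [Measure.addHaar_closedBall' volume x₀ (by positivity), finrank_euclideanSpace_fin,
        ENNReal.toReal_mul, ENNReal.toReal_ofReal (by positivity), ← hc_def]
    have hq_pow : ∀ k : ℕ, q ^ k = (2:ℝ) ^ (-((n:ℝ)*A) * (k:ℝ)) := by
      intro k
      rw [hq_def, ← Real.rpow_natCast ((2:ℝ) ^ (-((n:ℝ)*A))) k,
        ← Real.rpow_mul (by norm_num : (0:ℝ) ≤ 2)]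
    have hexp : ∀ k : ℕ, (((R * 2 ^ k) ^ n : ℝ) * c) ^ γ
        = R ^ ((n:ℝ)*γ) * (2:ℝ) ^ ((k:ℝ) * ((n:ℝ)*γ)) * c ^ γ := by
      intro k
      have h2k : (0:ℝ) < 2 ^ k := by positivity
      rw [← Real.rpow_natCast (R * 2 ^ k) n,
        Real.mul_rpow (Real.rpow_nonneg (by positivity) _) hc.le,
        ← Real.rpow_mul (by positivity), Real.mul_rpow hR.le h2k.le,
        ← Real.rpow_natCast (2:ℝ) k, ← Real.rpow_mul (by norm_num : (0:ℝ) ≤ 2)]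
    have hLV : ∀ k : ℕ, l k * (((R * 2 ^ k) ^ n : ℝ) * c) ^ γ
        = K' * m * (2:ℝ) ^ (-((k:ℝ) * ((n:ℝ)*B))) := by
      intro k
      have hcc : c ^ (-γ) * c ^ γ = 1 := by rw [← Real.rpow_add hc]; simp
      have hRR : R ^ (-((n:ℝ)*γ)) * R ^ ((n:ℝ)*γ) = 1 := by rw [← Real.rpow_add hR]; simp
      have h22 : (2:ℝ) ^ (-((n:ℝ)*A) * (k:ℝ)) * (2:ℝ) ^ ((k:ℝ) * ((n:ℝ)*γ))
          = (2:ℝ) ^ (-((k:ℝ) * ((n:ℝ)*B))) := by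
        rw [← Real.rpow_add two_pos]
        congr 1
        rw [hγ]; ring
      simp only [hl_def]
      calc c0 * q ^ k * (((R * 2 ^ k) ^ n : ℝ) * c) ^ γ
          = (K' * c ^ (-γ) * (m * R ^ (-((n:ℝ)*γ)))) * (2:ℝ) ^ (-((n:ℝ)*A) * (k:ℝ))
            * (R ^ ((n:ℝ)*γ) * (2:ℝ) ^ ((k:ℝ) * ((n:ℝ)*γ)) * c ^ γ) := by
            rw [hc0_def, ← hmR, hq_pow k, hexp k]
        _ = (c ^ (-γ) * c ^ γ) * (R ^ (-((n:ℝ)*γ)) * R ^ ((n:ℝ)*γ))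
            * ((2:ℝ) ^ (-((n:ℝ)*A) * (k:ℝ)) * (2:ℝ) ^ ((k:ℝ) * ((n:ℝ)*γ))) * (K' * m) := by
            ring
        _ = K' * m * (2:ℝ) ^ (-((k:ℝ) * ((n:ℝ)*B))) := by rw [hcc, hRR, h22]; ring
    have hkey : ∀ k : ℕ, eLpNorm (Mk k) s volume
        ≤ ENNReal.ofReal (l k * ((volume (closedBall x₀ (R * 2 ^ k))).toReal) ^ γ) := by
      intro k
      rcases k with _ | k
      · have h1 : eLpNorm (Mk 0) s volume ≤ eLpNorm M s volume := by
          simp only [hMk_def]; exact eLpNorm_indicator_le M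
        rw [hMeq] at h1
        refine h1.trans (ENNReal.ofReal_le_ofReal ?_)
        rw [hVol 0]
        have h2 := hLV 0
        simp only [Nat.cast_zero, zero_mul, neg_zero, Real.rpow_zero, mul_one] at h2
        rw [h2]
        exact le_mul_of_one_le_left hm.le hK'1
      · set d := K * (R * 2 ^ k) ^ (-((n:ℝ)*B)) with hd_def
        have hd : 0 < d := mul_pos hKpos (Real.rpow_pos_of_pos (by positivity) _)
        have hP : (R * 2 ^ k : ℝ) ^ (-((n:ℝ)*B)) * (R * 2 ^ k) ^ ((n:ℝ)*B) = 1 := by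
          rw [← Real.rpow_add (by positivity)]; simp
        have hpt : ∀ x, ‖Mk (k+1) x‖ ≤ ‖d * N x‖ := by
          intro x
          by_cases hx : x ∈ Ab (k+1)
          · have hx1 : dist x x₀ ≤ R * 2 ^ (k+1) := mem_closedBall.mp hx.1
            have hx2 : R * 2 ^ k < dist x x₀ := by
              have h3 := hx.2
              simp only [mem_closedBall, not_le, hρs] at h3
              exact h3
            have ht0 : 0 < dist x x₀ := lt_trans (by positivity) hx2
            have hnorm : ‖x - x₀‖ = dist x x₀ := (dist_eq_norm x x₀).symm
            have h1 : 1 ≤ d * (dist x x₀) ^ ((n:ℝ)*B) := by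
              rcases le_or_gt 0 ((n:ℝ)*B) with hnb0 | hnb0
              · have h2 : (R * 2 ^ k : ℝ) ^ ((n:ℝ)*B) ≤ (dist x x₀) ^ ((n:ℝ)*B) :=
                  Real.rpow_le_rpow (by positivity) hx2.le hnb0
                have h3 : 1 ≤ (R * 2 ^ k : ℝ) ^ (-((n:ℝ)*B)) * (dist x x₀) ^ ((n:ℝ)*B) := by
                  rw [← hP]
                  exact mul_le_mul_of_nonneg_left h2 (Real.rpow_nonneg (by positivity) _)
                calc (1:ℝ) = 1 * 1 := by ring
                  _ ≤ K * ((R * 2 ^ k : ℝ) ^ (-((n:ℝ)*B)) * (dist x x₀) ^ ((n:ℝ)*B)) :=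
                      mul_le_mul hK1 h3 one_pos.le hKpos.le
                  _ = d * (dist x x₀) ^ ((n:ℝ)*B) := by rw [hd_def]; ring
              · have h2 : (R * 2 ^ (k+1) : ℝ) ^ ((n:ℝ)*B) ≤ (dist x x₀) ^ ((n:ℝ)*B) :=
                  Real.rpow_le_rpow_of_nonpos ht0 hx1 hnb0.le
                have h5 : (R * 2 ^ (k+1) : ℝ) ^ ((n:ℝ)*B)
                    = (R * 2 ^ k) ^ ((n:ℝ)*B) * (2:ℝ) ^ ((n:ℝ)*B) := by
                  rw [show (R * 2 ^ (k+1) : ℝ) = (R * 2 ^ k) * 2 by ring,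
                    Real.mul_rpow (by positivity) (by norm_num)]
                have hK2 : (2:ℝ) ^ (-((n:ℝ)*B)) ≤ K := le_max_right _ _
                have h22 : (2:ℝ) ^ (-((n:ℝ)*B)) * (2:ℝ) ^ ((n:ℝ)*B) = 1 := by
                  rw [← Real.rpow_add two_pos]; simp
                calc (1:ℝ) = (2:ℝ) ^ (-((n:ℝ)*B)) * (2:ℝ) ^ ((n:ℝ)*B) := h22.symm
                  _ ≤ K * (2:ℝ) ^ ((n:ℝ)*B) :=
                      mul_le_mul_of_nonneg_right hK2 (Real.rpow_nonneg (by norm_num) _)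
                  _ = K * ((R * 2 ^ k) ^ (-((n:ℝ)*B))
                      * ((R * 2 ^ k) ^ ((n:ℝ)*B) * (2:ℝ) ^ ((n:ℝ)*B))) := by
                      rw [← mul_assoc ((R * 2 ^ k : ℝ) ^ (-((n:ℝ)*B))), hP, one_mul]
                  _ = d * ((R * 2 ^ (k+1)) ^ ((n:ℝ)*B)) := by rw [hd_def, h5]; ring
                  _ ≤ d * (dist x x₀) ^ ((n:ℝ)*B) := mul_le_mul_of_nonneg_left h2 hd.le
            have hMkx : Mk (k+1) x = M x := by
              simp only [hMk_def]; exact Set.indicator_of_mem hx M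
            rw [hMkx, Real.norm_eq_abs, Real.norm_eq_abs, hN_def, abs_mul, abs_of_pos hd,
              abs_mul, abs_of_nonneg (Real.rpow_nonneg (norm_nonneg _) _), hnorm]
            calc |M x| = |M x| * 1 := (mul_one _).symm
              _ ≤ |M x| * (d * (dist x x₀) ^ ((n:ℝ)*B)) :=
                  mul_le_mul_of_nonneg_left h1 (abs_nonneg _)
              _ = d * (|M x| * (dist x x₀) ^ ((n:ℝ)*B)) := by ring
          · have hMkx : Mk (k+1) x = 0 := by
              simp only [hMk_def]; exact Set.indicator_of_notMem hx M
            rw [hMkx]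
            simp only [norm_zero, Real.norm_eq_abs, abs_mul]
            positivity
        have hle1 : eLpNorm (Mk (k+1)) s volume ≤ eLpNorm (fun x => d * N x) s volume :=
          eLpNorm_mono hpt
        have hle2 : eLpNorm (fun x => d * N x) s volume = ENNReal.ofReal (d * nn) := by
          have h6 := eLpNorm_const_smul (𝕜 := ℝ) (F := ℝ) d N s volume
          rw [show (d • N) = fun x => d * N x from rfl] at h6
          rw [h6, hNeq, Real.enorm_eq_ofReal hd.le, ← ENNReal.ofReal_mul hd.le]
        refine hle1.trans ?_
        rw [hle2]
        apply ENNReal.ofReal_le_ofReal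
        rw [hVol (k+1), hLV (k+1)]
        have hd2 : d * nn = K * m * (2:ℝ) ^ (-((k:ℝ)*((n:ℝ)*B))) := by
          rw [hd_def, hnnR]
          have e1 : (R * 2 ^ k : ℝ) ^ (-((n:ℝ)*B))
              = R ^ (-((n:ℝ)*B)) * (2:ℝ) ^ (-(k:ℝ)*((n:ℝ)*B)) := by
            rw [Real.mul_rpow hR.le (by positivity), ← Real.rpow_natCast (2:ℝ) k,
              ← Real.rpow_mul (by norm_num : (0:ℝ) ≤ 2)]
            congr 1
            ring
          have e2 : R ^ (-((n:ℝ)*B)) * R ^ ((n:ℝ)*B) = 1 := by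
            rw [← Real.rpow_add hR]; simp
          calc K * (R * 2 ^ k : ℝ) ^ (-((n:ℝ)*B)) * (m * R ^ ((n:ℝ)*B))
              = (R ^ (-((n:ℝ)*B)) * R ^ ((n:ℝ)*B))
                * (K * (2:ℝ) ^ (-(k:ℝ)*((n:ℝ)*B))) * m := by rw [e1]; ring
            _ = K * (2:ℝ) ^ (-(k:ℝ)*((n:ℝ)*B)) * m := by rw [e2]; ring
            _ = K * m * (2:ℝ) ^ (-((k:ℝ)*((n:ℝ)*B))) := by
                rw [show (-(k:ℝ)*((n:ℝ)*B)) = -((k:ℝ)*((n:ℝ)*B)) by ring]; ring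
        rw [hd2]
        have e3 : (2:ℝ) ^ (-((((k+1):ℕ):ℝ) * ((n:ℝ)*B)))
            = (2:ℝ) ^ (-((n:ℝ)*B)) * (2:ℝ) ^ (-((k:ℝ)*((n:ℝ)*B))) := by
          rw [← Real.rpow_add two_pos]
          congr 1
          push_cast
          ring
        rw [e3, ← hKK']
        exact le_of_eq (by ring)
    have hblock : ∀ k, IsBlock n p s α (ak k) := by
      intro k
      refine ⟨(hMkmeas k).const_mul _, x₀, R * 2 ^ k, by positivity, ?_, ?_⟩
      · intro x hx
        have h7 : Mk k x = 0 := by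
          simp only [hMk_def]
          exact Set.indicator_of_notMem (fun hmem => hx hmem.1) M
        simp [hak_def, h7]
      · rw [← hγ_def]
        have h1 : eLpNorm (ak k) s volume = (‖(l k)⁻¹‖₊ : ℝ≥0∞) * eLpNorm (Mk k) s volume := by
          have h8 := eLpNorm_const_smul (𝕜 := ℝ) (F := ℝ) ((l k)⁻¹) (Mk k) s volume
          rw [show ((l k)⁻¹ • Mk k) = ak k from rfl] at h8
          exact h8
        rw [h1, ← enorm_eq_nnnorm, Real.enorm_eq_ofReal (inv_nonneg.mpr (hl k).le)]
        calc ENNReal.ofReal (l k)⁻¹ * eLpNorm (Mk k) s volume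
            ≤ ENNReal.ofReal (l k)⁻¹
              * ENNReal.ofReal (l k * ((volume (closedBall x₀ (R * 2 ^ k))).toReal) ^ γ) :=
              mul_le_mul_right (hkey k) _
          _ = ENNReal.ofReal ((volume (closedBall x₀ (R * 2 ^ k))).toReal ^ γ) := by
              rw [← ENNReal.ofReal_mul (inv_nonneg.mpr (hl k).le),
                inv_mul_cancel_left₀ (hl k).ne']
    have hfk : ∀ k : ℕ, |l k| ^ mp = c0 ^ mp * (q ^ mp) ^ k := by
      intro k
      rw [abs_of_pos (hl k)]
      simp only [hl_def]
      rw [Real.mul_rpow hc0.le (pow_nonneg hq0.le k), ← Real.rpow_natCast q k,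
        ← Real.rpow_mul hq0.le, mul_comm (k:ℝ) mp, Real.rpow_mul hq0.le, Real.rpow_natCast]
    have hsummable : Summable (fun k => |l k| ^ mp) := by
      rw [show (fun k => |l k| ^ mp) = (fun k => c0 ^ mp * (q ^ mp) ^ k) from funext hfk]
      exact (summable_geometric_of_lt_one hqmp0 hqmp1).mul_left _
    have htsum : (∑' k, |l k| ^ mp) = c0 ^ mp * (1 - q ^ mp)⁻¹ := by
      rw [show (fun k => |l k| ^ mp) = (fun k => c0 ^ mp * (q ^ mp) ^ k) from funext hfk,
        tsum_mul_left, tsum_geometric_of_lt_one hqmp0 hqmp1]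
    have hhs : ∀ x, HasSum (fun k => l k * ak k x) (M x) := by
      intro x
      have hex : ∃ k : ℕ, dist x x₀ ≤ R * 2 ^ k := by
        obtain ⟨k, hk⟩ := pow_unbounded_of_one_lt (dist x x₀ / R) (one_lt_two (α := ℝ))
        refine ⟨k, ?_⟩
        rw [mul_comm]
        exact (div_le_iff₀ hR).mp hk.le
      have hspec : dist x x₀ ≤ R * 2 ^ (Nat.find hex) := Nat.find_spec hex
      have hmin : ∀ j, j < Nat.find hex → ¬ dist x x₀ ≤ R * 2 ^ j := fun j hj =>
        Nat.find_min hex hj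
      have hval : ∀ k, l k * ak k x = (Ab k).indicator M x := by
        intro k
        simp only [hak_def, hMk_def]
        rw [← mul_assoc, mul_inv_cancel₀ (hl k).ne', one_mul]
      have hmem : x ∈ Ab (Nat.find hex) := by
        refine ⟨mem_closedBall.mpr hspec, ?_⟩
        obtain hf0 | ⟨j, hfj⟩ : Nat.find hex = 0 ∨ ∃ j, Nat.find hex = j + 1 := by
          rcases Nat.eq_zero_or_pos (Nat.find hex) with h | h
          · exact Or.inl h
          · exact Or.inr ⟨Nat.find hex - 1, (Nat.succ_pred_eq_of_pos h).symm⟩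
        · rw [hf0, hρ0]
          simp [closedBall_eq_empty.mpr (by norm_num : (-1:ℝ) < 0)]
        · rw [hfj, hρs j]
          have h9 := hmin j (hfj ▸ Nat.lt_succ_self j)
          simpa [mem_closedBall] using h9
      have hnot : ∀ k, k ≠ Nat.find hex → (Ab k).indicator M x = 0 := by
        intro k hk
        apply Set.indicator_of_notMem
        intro hxk
        rcases lt_or_gt_of_ne hk with h | h
        · exact hmin k h (mem_closedBall.mp hxk.1)
        · obtain ⟨j, rfl⟩ : ∃ j, k = j + 1 := ⟨k - 1, by omega⟩
          have hj : Nat.find hex ≤ j := by omega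
          apply hxk.2
          rw [hρs j]
          refine mem_closedBall.mpr (le_trans hspec ?_)
          have h10 : (2:ℝ) ^ (Nat.find hex) ≤ 2 ^ j :=
            pow_le_pow_right₀ one_le_two hj
          exact mul_le_mul_of_nonneg_left h10 hR.le
      have hfinal : HasSum (fun k => (Ab k).indicator M x) ((Ab (Nat.find hex)).indicator M x) :=
        hasSum_single (Nat.find hex) hnot
      rw [Set.indicator_of_mem hmem] at hfinal
      rw [show (fun k => l k * ak k x) = (fun k => (Ab k).indicator M x) from funext hval]
      exact hfinal
    have hdec : IsBLDecomp n p s α M l ak :=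
      ⟨hblock, hsummable, Eventually.of_forall hhs⟩
    refine ⟨⟨l, ak, hdec⟩, ?_⟩
    rw [BLnorm]
    have hmemS : ((∑' k, |l k| ^ min p 1) ^ (min p 1)⁻¹ : ℝ) ∈ {c | ∃ l a,
        IsBLDecomp n p s α M l a ∧ c = (∑' k, |l k| ^ min p 1) ^ (min p 1)⁻¹} :=
      ⟨l, ak, hdec, rfl⟩
    refine le_trans (csInf_le (BL_bddBelow n p s α M) hmemS) ?_
    rw [← hmp_def, htsum]
    have hfin : (c0 ^ mp * (1 - q ^ mp)⁻¹) ^ mp⁻¹ = c0 * ((1 - q ^ mp)⁻¹) ^ mp⁻¹ := by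
      rw [Real.mul_rpow (Real.rpow_nonneg hc0.le _) (inv_nonneg.mpr (by linarith)),
        ← Real.rpow_mul hc0.le, mul_inv_cancel₀ hmp.ne', Real.rpow_one]
    rw [hfin, hc0_def, hC_def]
    exact le_of_eq (by ring)
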